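/- Let φ be an Orlicz function taking only finite values, satisfying the Δ₂-condition at zero, and such that ∑_{n=n₁}^∞ φ(1/n) < ∞ for some n₁ ∈ ℕ. If (x_n) is a sequence of elements of ces_φ with ρ_φ(x_n) → ∞, then ‖x_n‖_φ → ∞. -/

import Mathlib

open scoped ENNReal
open Filter

/-- An Orlicz function: `φ : ℝ → [0,∞]` even, convex, left continuous on `ℝ₊`,
continuous at zero, with `φ 0 = 0` and `φ u → ∞` as `u → ∞`. -/
structure OrliczFunction where
  toFun : ℝ → ℝ≥0∞
  even' : ∀ u : ℝ, toFun (-u) = toFun u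
  convex' : ∀ u v t : ℝ, 0 ≤ t → t ≤ 1 →
    toFun (t * u + (1 - t) * v) ≤ ENNReal.ofReal t * toFun u + ENNReal.ofReal (1 - t) * toFun v
  map_zero' : toFun 0 = 0
  leftContinuous' : ∀ t : ℝ, 0 < t → Tendsto toFun (nhdsWithin t (Set.Iio t)) (nhds (toFun t))
  continuousAtZero' : Tendsto toFun (nhds 0) (nhds 0)
  tendsto_top' : Tendsto toFun atTop (nhds ⊤)

/-- The Cesàro mean `σx(n) = (1/n) ∑_{j=1}^n |x j|` (with `0`-based indexing). -/
noncomputable def cesaroMean (x : ℕ → ℝ) (n : ℕ) : ℝ :=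
  (∑ j ∈ Finset.range (n + 1), |x j|) / (n + 1)

/-- The modular `ρ_φ(x) = ∑_i φ(σx(i))`. -/
noncomputable def rho (φ : OrliczFunction) (x : ℕ → ℝ) : ℝ≥0∞ :=
  ∑' n : ℕ, φ.toFun (cesaroMean x n)

/-- The Cesàro–Orlicz sequence space `ces_φ`. -/
def cesOrlicz (φ : OrliczFunction) : Set (ℕ → ℝ) :=
  {x | ∃ lam : ℝ, 0 < lam ∧ rho φ (fun i => lam * x i) < ⊤}

/-- The Luxemburg norm `‖x‖_φ = inf {λ > 0 : ρ_φ(x/λ) ≤ 1}`. -/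
noncomputable def luxNorm (φ : OrliczFunction) (x : ℕ → ℝ) : ℝ :=
  sInf {lam : ℝ | 0 < lam ∧ rho φ (fun i => x i / lam) ≤ 1}

/-- The subspace `A_φ` of `ces_φ`. -/
def Aphi (φ : OrliczFunction) : Set (ℕ → ℝ) :=
  {x | x ∈ cesOrlicz φ ∧ ∀ k : ℝ, 0 < k → ∃ nk : ℕ,
    ∑' n : ℕ, φ.toFun ((k / ((nk + n + 1 : ℕ) : ℝ)) * ∑ i ∈ Finset.range (nk + n + 1), |x i|) < ⊤}

/-- `∃ n₁, ∑_{n=n₁}^∞ φ(1/n) < ∞`. -/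
def TailFinite (φ : OrliczFunction) : Prop :=
  ∃ n₁ : ℕ, ∑' n : ℕ, φ.toFun (((n₁ + n + 1 : ℕ) : ℝ)⁻¹) < ⊤

/-- The `Δ₂`-condition at zero. -/
def Delta2Zero (φ : OrliczFunction) : Prop :=
  ∃ K : ℝ, 0 < K ∧ ∃ a : ℝ, 0 < a ∧ 0 < φ.toFun a ∧
    ∀ u : ℝ, 0 ≤ u → u ≤ a → φ.toFun (2 * u) ≤ ENNReal.ofReal K * φ.toFun u

/-- `φ` takes only finite values. -/
def FiniteValued (φ : OrliczFunction) : Prop := ∀ u : ℝ, φ.toFun u ≠ ⊤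

lemma OrliczFunction.mono (φ : OrliczFunction) {u v : ℝ} (hu : 0 ≤ u) (huv : u ≤ v) :
    φ.toFun u ≤ φ.toFun v := by
  rcases eq_or_lt_of_le (hu.trans huv) with hv | hv
  · have : u = 0 := le_antisymm (huv.trans hv.symm.le) hu
    simp [this, ← hv, φ.map_zero']
  · have ht0 : 0 ≤ u / v := div_nonneg hu hv.le
    have ht1 : u / v ≤ 1 := (div_le_one hv).2 huv
    have := φ.convex' v 0 (u / v) ht0 ht1
    rw [mul_zero, add_zero, div_mul_cancel₀ _ hv.ne', φ.map_zero', mul_zero, add_zero] at this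
    calc φ.toFun u ≤ ENNReal.ofReal (u / v) * φ.toFun v := this
      _ ≤ 1 * φ.toFun v := by gcongr; exact ENNReal.ofReal_le_one.2 ht1
      _ = φ.toFun v := one_mul _

lemma cesaroMean_nonneg (x : ℕ → ℝ) (n : ℕ) : 0 ≤ cesaroMean x n := by
  apply div_nonneg (Finset.sum_nonneg fun i _ => abs_nonneg _)
  positivity

lemma cesaroMean_mul (x : ℕ → ℝ) {c : ℝ} (hc : 0 ≤ c) (n : ℕ) :
    cesaroMean (fun i => c * x i) n = c * cesaroMean x n := by
  simp only [cesaroMean, abs_mul, abs_of_nonneg hc, ← Finset.mul_sum, mul_div_assoc]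

lemma cesaroMean_div (x : ℕ → ℝ) {lam : ℝ} (h : 0 < lam) (n : ℕ) :
    cesaroMean (fun i => x i / lam) n = cesaroMean x n / lam := by
  have : (fun i => x i / lam) = fun i => lam⁻¹ * x i := by ext i; ring
  rw [this, cesaroMean_mul x (by positivity), inv_mul_eq_div]

lemma delta2_pos (φ : OrliczFunction) {K a : ℝ} (ha : 0 < a)
    (hφa : 0 < φ.toFun a)
    (hΔ : ∀ u : ℝ, 0 ≤ u → u ≤ a → φ.toFun (2 * u) ≤ ENNReal.ofReal K * φ.toFun u)
    (j : ℕ) : 0 < φ.toFun (a / 2 ^ j) := by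
  induction j with
  | zero => simpa using hφa
  | succ j ih =>
    have h1 : (0:ℝ) ≤ a / 2 ^ (j + 1) := by positivity
    have h2 : a / 2 ^ (j + 1) ≤ a := div_le_self ha.le (one_le_pow₀ (by norm_num))
    have hstep := hΔ _ h1 h2
    have heq : 2 * (a / 2 ^ (j + 1)) = a / 2 ^ j := by ring
    rw [heq] at hstep
    by_contra hz
    push_neg at hz
    have h0 : φ.toFun (a / 2 ^ (j + 1)) = 0 := le_antisymm hz zero_le
    rw [h0, mul_zero] at hstep
    exact absurd (le_antisymm hstep zero_le) ih.ne'

lemma delta2_iter (φ : OrliczFunction) {K a : ℝ} (ha : 0 < a)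
    (hΔ : ∀ u : ℝ, 0 ≤ u → u ≤ a → φ.toFun (2 * u) ≤ ENNReal.ofReal K * φ.toFun u)
    (m : ℕ) : ∀ u : ℝ, 0 ≤ u → u ≤ a / 2 ^ m →
      φ.toFun (2 ^ m * u) ≤ (ENNReal.ofReal K) ^ m * φ.toFun u := by
  induction m with
  | zero => intro u _ _; simp
  | succ m ih =>
    intro u hu hua
    have hua' : u ≤ a / 2 ^ m :=
      hua.trans (div_le_div_of_nonneg_left ha.le (by positivity)
        (pow_le_pow_right₀ (by norm_num) (Nat.le_succ m)))
    have h1 : u * 2 ^ (m + 1) ≤ a := (le_div_iff₀ (by positivity)).1 hua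
    have h2m : 2 ^ m * u ≤ a := by
      have hnn : (0:ℝ) ≤ 2 ^ m * u := by positivity
      have hexp : u * 2 ^ (m + 1) = 2 * (2 ^ m * u) := by ring
      linarith
    have hstep := hΔ (2 ^ m * u) (by positivity) h2m
    have heq : 2 * (2 ^ m * u) = 2 ^ (m + 1) * u := by ring
    rw [heq] at hstep
    calc φ.toFun (2 ^ (m + 1) * u) ≤ ENNReal.ofReal K * φ.toFun (2 ^ m * u) := hstep
      _ ≤ ENNReal.ofReal K * ((ENNReal.ofReal K) ^ m * φ.toFun u) := by
          gcongr; exact ih u hu hua'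
      _ = (ENNReal.ofReal K) ^ (m + 1) * φ.toFun u := by rw [pow_succ]; ring

lemma lemA (φ : OrliczFunction) (hfin : FiniteValued φ) (hδ : Delta2Zero φ) (m : ℕ) :
    ∃ D : ℝ≥0∞, D ≠ ⊤ ∧ ∀ (x : ℕ → ℝ) (lam : ℝ), 0 < lam → lam ≤ 2 ^ m →
      rho φ (fun i => x i / lam) ≤ 1 → rho φ x ≤ D := by
  obtain ⟨K, hK, a, ha, hφa, hΔ⟩ := hδ
  obtain ⟨B, hB⟩ := eventually_atTop.1 (φ.tendsto_top'.eventually_const_lt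
    (show (1:ℝ≥0∞) < ⊤ by simp))
  set ε := φ.toFun (a / 2 ^ m) with hε
  have hεpos : 0 < ε := delta2_pos φ ha hφa hΔ m
  have hεtop : ε ≠ ⊤ := hfin _
  set c := φ.toFun (2 ^ m * B) with hc
  have hctop : c ≠ ⊤ := hfin _
  refine ⟨(ENNReal.ofReal K) ^ m + c / ε, ?_, ?_⟩
  · refine ENNReal.add_ne_top.2 ⟨ENNReal.pow_ne_top ENNReal.ofReal_ne_top, ?_⟩
    exact (ENNReal.div_lt_top hctop hεpos.ne').ne
  intro x lam hlam hlam2 hρ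
  set D := (ENNReal.ofReal K) ^ m + c / ε with hD
  have key : ∀ i : ℕ, φ.toFun (cesaroMean x i) ≤
      D * φ.toFun (cesaroMean (fun j => x j / lam) i) := by
    intro i
    set s := cesaroMean (fun j => x j / lam) i with hs
    have hs0 : 0 ≤ s := cesaroMean_nonneg _ _
    have hxi : cesaroMean x i = lam * s := by
      rw [hs, cesaroMean_div x hlam]
      field_simp
    have hle : φ.toFun (cesaroMean x i) ≤ φ.toFun (2 ^ m * s) := by
      rw [hxi]
      exact φ.mono (by positivity) (mul_le_mul_of_nonneg_right hlam2 hs0)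
    rcases le_or_gt s (a / 2 ^ m) with hcase | hcase
    · refine hle.trans ((delta2_iter φ ha hΔ m s hs0 hcase).trans ?_)
      exact mul_le_mul_left (le_add_right le_rfl) _
    · have hφs1 : φ.toFun s ≤ 1 := le_trans (ENNReal.le_tsum i) hρ
      have hsB : s ≤ B := by
        by_contra hsb
        push_neg at hsb
        exact absurd hφs1 (not_le.2 (hB s hsb.le))
      have hεs : ε ≤ φ.toFun s := φ.mono (by positivity) hcase.le
      calc φ.toFun (cesaroMean x i)
          ≤ φ.toFun (2 ^ m * B) := hle.trans (φ.mono (by positivity)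
            (mul_le_mul_of_nonneg_left hsB (by positivity)))
        _ = (c / ε) * ε := (ENNReal.div_mul_cancel hεpos.ne' hεtop).symm
        _ ≤ (c / ε) * φ.toFun s := mul_le_mul_right hεs _
        _ ≤ D * φ.toFun s := mul_le_mul_left (le_add_left le_rfl) _
  calc rho φ x ≤ ∑' i, D * φ.toFun (cesaroMean (fun j => x j / lam) i) :=
        ENNReal.tsum_le_tsum key
    _ = D * rho φ (fun j => x j / lam) := ENNReal.tsum_mul_left
    _ ≤ D * 1 := mul_le_mul_right hρ _
    _ = D := mul_one _

set_option maxHeartbeats 1000000 in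
lemma lemB (φ : OrliczFunction) (x : ℕ → ℝ) (hx : x ∈ cesOrlicz φ) :
    ∃ lam : ℝ, 0 < lam ∧ rho φ (fun i => x i / lam) ≤ 1 := by
  obtain ⟨μ, hμ, hρ⟩ := hx
  have hcm : ∀ i, cesaroMean (fun j => μ * x j) i = μ * cesaroMean x i :=
    cesaroMean_mul x hμ.le
  set f : ℕ → ℝ≥0∞ := fun i => φ.toFun (μ * cesaroMean x i) with hf
  have hρ' : ∑' i, f i ≠ ⊤ := by
    have : rho φ (fun j => μ * x j) = ∑' i, f i := by
      unfold rho; congr 1; ext i; rw [hcm]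
    rw [this] at hρ; exact hρ.ne
  have htail := ENNReal.tendsto_sum_nat_add f hρ'
  obtain ⟨I, hI⟩ := (htail.eventually_lt_const
    (show (0:ℝ≥0∞) < 1/2 by norm_num)).exists
  have hsmall : ∀ᶠ lam : ℝ in atTop, ∀ i ∈ Finset.range I,
      φ.toFun (cesaroMean x i / lam) < ((2:ℝ≥0∞) * (I + 1))⁻¹ := by
    rw [eventually_all_finset]
    intro i _
    have h1 : Tendsto (fun lam : ℝ => cesaroMean x i / lam) atTop (nhds 0) :=
      tendsto_const_nhds.div_atTop tendsto_id
    have h2 : Tendsto (fun lam : ℝ => φ.toFun (cesaroMean x i / lam)) atTop (nhds 0) :=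
      φ.continuousAtZero'.comp h1
    refine h2.eventually_lt_const ?_
    rw [ENNReal.inv_pos]
    exact ENNReal.mul_ne_top (by simp) (by simp)
  obtain ⟨lam, hlam1, hlam2⟩ := (hsmall.and (eventually_ge_atTop (max μ⁻¹ 1))).exists
  have hlampos : 0 < lam := lt_of_lt_of_le one_pos (le_trans (le_max_right _ _) hlam2)
  refine ⟨lam, hlampos, ?_⟩
  set g : ℕ → ℝ≥0∞ := fun i => φ.toFun (cesaroMean x i / lam) with hg
  have hrg : rho φ (fun j => x j / lam) = ∑' i, g i := by
    unfold rho; congr 1; ext i; rw [cesaroMean_div x hlampos]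
  rw [hrg, ENNReal.tsum_eq_iSup_nat]
  have hpart1 : ∑ i ∈ Finset.range I, g i ≤ 1/2 := by
    calc ∑ i ∈ Finset.range I, g i
        ≤ ∑ _i ∈ Finset.range I, ((2:ℝ≥0∞) * (I + 1))⁻¹ :=
          Finset.sum_le_sum fun i hi => (hlam1 i hi).le
      _ = I * ((2:ℝ≥0∞) * (I + 1))⁻¹ := by
          rw [Finset.sum_const, Finset.card_range, nsmul_eq_mul]
      _ ≤ (I + 1) * ((2:ℝ≥0∞) * (I + 1))⁻¹ := by
          gcongr; exact le_self_add
      _ = 1/2 := by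
          rw [ENNReal.mul_inv (by simp) (by simp), ← mul_assoc, mul_comm ((I:ℝ≥0∞)+1),
            mul_assoc, ENNReal.mul_inv_cancel (by simp) (by simp), mul_one, one_div]
  have hpart2 : ∑' i, g (i + I) ≤ 1/2 := by
    refine le_trans (ENNReal.tsum_le_tsum fun k => ?_) hI.le
    have hσ : 0 ≤ cesaroMean x (k + I) := cesaroMean_nonneg _ _
    have hinv : lam⁻¹ ≤ μ := by
      rw [inv_le_comm₀ hlampos hμ]
      exact le_trans (le_max_left _ _) hlam2
    refine φ.mono (by positivity) ?_
    rw [div_eq_mul_inv, mul_comm μ]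
    exact mul_le_mul_of_nonneg_left hinv hσ
  refine iSup_le fun N => ?_
  have key : ∑ i ∈ Finset.range N, g i ≤ (∑ i ∈ Finset.range I, g i) + ∑' i, g (i + I) := by
    rcases le_or_gt N I with hNI | hNI
    · exact le_trans (Finset.sum_le_sum_of_subset
        (Finset.range_subset_range.2 hNI)) le_self_add
    · rw [Finset.range_eq_Ico, ← Finset.sum_Ico_consecutive g (Nat.zero_le I) hNI.le,
        ← Finset.range_eq_Ico]
      gcongr
      rw [Finset.sum_Ico_eq_sum_range]
      refine le_trans (Finset.sum_le_sum fun i _ => le_of_eq (by rw [add_comm])) ?_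
      exact ENNReal.sum_le_tsum (f := fun i => g (i + I)) _
  calc ∑ i ∈ Finset.range N, g i
      ≤ (∑ i ∈ Finset.range I, g i) + ∑' i, g (i + I) := key
    _ ≤ 1/2 + 1/2 := add_le_add hpart1 hpart2
    _ = 1 := ENNReal.add_halves 1

/-- if `φ ∈ Δ₂(0)` and `ρ_φ(x_n) → ∞`, then `‖x_n‖_φ → ∞`. -/
theorem stmt_14 (φ : OrliczFunction) (hfin : FiniteValued φ) (hδ : Delta2Zero φ)
    (htail : TailFinite φ) (xs : ℕ → ℕ → ℝ) (hmem : ∀ n, xs n ∈ cesOrlicz φ)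
    (h : Tendsto (fun n => rho φ (xs n)) atTop (nhds ⊤)) :
    Tendsto (fun n => luxNorm φ (xs n)) atTop atTop := by
  rw [tendsto_atTop]
  intro M
  obtain ⟨m, hm⟩ := pow_unbounded_of_one_lt (y := (2:ℝ)) M (by norm_num)
  obtain ⟨D, hD, hA⟩ := lemA φ hfin hδ m
  have hev : ∀ᶠ n in atTop, D < rho φ (xs n) :=
    h.eventually_const_lt hD.lt_top
  filter_upwards [hev] with n hn
  by_contra hM
  push_neg at hM
  obtain ⟨lam, hlamS, hlamM⟩ := exists_lt_of_csInf_lt (lemB φ (xs n) (hmem n)) hM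
  exact absurd (hA (xs n) lam hlamS.1 ((hlamM.trans hm).le) hlamS.2) (not_le.2 hn)
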